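/- Let $g: \mathbb{R}^d \to \mathbb{R}$ be $L$-smooth and $\mu$-strongly convex with minimizer $y^*$. Let $w$ be a random vector and suppose $y_{t+1} = y_t - \gamma \alpha w$ with $\gamma < 1/(2L)$ and $0 < \alpha < 1$. Then $\mathbb{E}\|y_{t+1} - y^*\|^2 \le (1 - \tfrac{\mu\gamma\alpha}{2})\|y_t - y^*\|^2 - \tfrac{\gamma^2\alpha}{4}\|\mathbb{E}[w]\|^2 + \tfrac{4\gamma\alpha}{\mu}\|\nabla g(y_t) - \mathbb{E}[w]\|^2 + \tfrac{3\gamma^2\alpha}{2}\mathrm{Var}[w]$. -/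

import Mathlib

open MeasureTheory
open scoped InnerProductSpace

private lemma sgd_descent_lemma {d : ℕ} (g : EuclideanSpace ℝ (Fin d) → ℝ)
    (G : EuclideanSpace ℝ (Fin d) → EuclideanSpace ℝ (Fin d)) (L : ℝ)
    (hgrad : ∀ y, HasGradientAt g (G y) y)
    (hsm : ∀ y1 y2, ‖G y1 - G y2‖ ≤ L * ‖y1 - y2‖) (y v : EuclideanSpace ℝ (Fin d)) :
    g (y + v) ≤ g y + ⟪G y, v⟫_ℝ + L / 2 * ‖v‖ ^ 2 := by
  set ψ : ℝ → ℝ := fun s => g (y + s • v) - s * ⟪G y, v⟫_ℝ - L / 2 * s ^ 2 * ‖v‖ ^ 2 with hψdef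
  have hψ : ∀ s : ℝ, HasDerivAt ψ (⟪G (y + s • v), v⟫_ℝ - ⟪G y, v⟫_ℝ - L * s * ‖v‖ ^ 2) s := by
    intro s
    have h1 : HasDerivAt (fun s : ℝ => y + s • v) v s := by
      simpa using ((hasDerivAt_id s).smul_const v).const_add y
    have h2 : HasDerivAt (fun s : ℝ => g (y + s • v)) ⟪G (y + s • v), v⟫_ℝ s := by
      have := (hgrad (y + s • v)).hasFDerivAt.comp_hasDerivAt s h1
      simp at this
      exact this
    have h3 : HasDerivAt (fun s : ℝ => s * ⟪G y, v⟫_ℝ) ⟪G y, v⟫_ℝ s := by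
      simpa using (hasDerivAt_id s).mul_const ⟪G y, v⟫_ℝ
    have h4 : HasDerivAt (fun s : ℝ => L / 2 * s ^ 2 * ‖v‖ ^ 2) (L * s * ‖v‖ ^ 2) s := by
      have h5 : HasDerivAt (fun s : ℝ => s ^ 2) (2 * s) s := by simpa using hasDerivAt_pow 2 s
      have h6 := (h5.const_mul (L / 2)).mul_const (‖v‖ ^ 2)
      rw [show L * s * ‖v‖ ^ 2 = L / 2 * (2 * s) * ‖v‖ ^ 2 by ring]
      exact h6
    exact (h2.sub h3).sub h4
  have hanti : AntitoneOn ψ (Set.Icc (0:ℝ) 1) := by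
    apply antitoneOn_of_deriv_nonpos (convex_Icc 0 1)
    · exact fun s _ => (hψ s).continuousAt.continuousWithinAt
    · exact fun s _ => (hψ s).differentiableAt.differentiableWithinAt
    · intro s hs
      rw [interior_Icc] at hs
      rw [(hψ s).deriv]
      have h5 : ⟪G (y + s • v), v⟫_ℝ - ⟪G y, v⟫_ℝ = ⟪G (y + s • v) - G y, v⟫_ℝ := by
        rw [inner_sub_left]
      have h6 : ⟪G (y + s • v) - G y, v⟫_ℝ ≤ ‖G (y + s • v) - G y‖ * ‖v‖ :=
        real_inner_le_norm _ _
      have h7 : ‖G (y + s • v) - G y‖ ≤ L * ‖s • v‖ := by simpa using hsm (y + s • v) y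
      have h8 : ‖s • v‖ = s * ‖v‖ := by
        rw [norm_smul, Real.norm_eq_abs, abs_of_pos hs.1]
      rw [h8] at h7
      nlinarith [norm_nonneg v, hs.1.le]
  have hle := hanti (Set.left_mem_Icc.2 zero_le_one) (Set.right_mem_Icc.2 zero_le_one) zero_le_one
  simp only [hψdef, one_smul, zero_smul, add_zero, one_mul, zero_mul, one_pow] at hle
  nlinarith [hle]

set_option maxHeartbeats 1000000 in
private lemma sgd_scalar_ineq (A B Gn W J K V L μ γ α : ℝ)
    (hL : 0 < L) (hμ : 0 < μ) (hγ0 : 0 < γ) (hγ : γ < 1/(2*L)) (hα0 : 0 < α) (hα1 : α < 1)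
    (hμL : μ ≤ L)
    (hB : 0 ≤ B) (hGn : 0 ≤ Gn) (hW : 0 ≤ W) (hV : 0 ≤ V)
    (hJ : μ * A^2 + Gn^2 * (1/L) ≤ 2*J)
    (hK : K ≤ A*B)
    (hWb : W ≤ Gn + B) :
    A^2 - 2*(γ*α)*(J - K) + (γ*α)^2*W^2 + (γ*α)^2*V
      ≤ (1 - μ*γ*α/2)*A^2 - γ^2*α/4*W^2 + 4*γ*α/μ*B^2 + 3*γ^2*α/2*V := by
  have he : (0:ℝ) ≤ γ*α := by positivity
  have hL1 : 2*γ < 1/L := by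
    rw [lt_div_iff₀ hL]; rw [lt_div_iff₀ (by positivity : (0:ℝ) < 2*L)] at hγ; linarith
  have hγμ : γ*μ < 1/2 := by
    rw [lt_div_iff₀ (by positivity : (0:ℝ) < 2*L)] at hγ
    nlinarith
  have hμ1 : 10/3*γ ≤ 2*(1/μ) := by
    rw [show (2:ℝ)*(1/μ) = 2/μ by ring, le_div_iff₀ hμ]
    nlinarith
  have pyoung : 2*(A*B) ≤ μ/2*A^2 + 2/μ*B^2 := by
    rw [← sub_nonneg]
    have h : μ/2*A^2 + 2/μ*B^2 - 2*(A*B) = (μ*A - 2*B)^2/(2*μ) := by field_simp; ring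
    rw [h]; positivity
  have hW2 : W^2 ≤ 8/5*Gn^2 + 8/3*B^2 := by
    nlinarith [sq_nonneg (3*Gn - 5*B), mul_le_mul hWb hWb hW (by positivity)]
  have f1 := mul_le_mul_of_nonneg_left hJ he
  have f2 : γ*α*(2*K) ≤ γ*α*(μ/2*A^2 + 2/μ*B^2) :=
    mul_le_mul_of_nonneg_left (by linarith) he
  have hαα : α^2 ≤ α := by nlinarith
  have f3 : (γ*α)^2*W^2 + γ^2*α/4*W^2 ≤ 2*γ^2*α*Gn^2 + 10/3*γ^2*α*B^2 := by
    linarith [mul_le_mul_of_nonneg_left hW2 (show (0:ℝ) ≤ 5/4*γ^2*α by positivity),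
      mul_le_mul_of_nonneg_right (mul_le_mul_of_nonneg_left hαα (sq_nonneg γ)) (sq_nonneg W)]
  have f4 : (γ*α)^2*V ≤ 3/2*γ^2*α*V := by
    linarith [mul_le_mul_of_nonneg_right (mul_le_mul_of_nonneg_left hαα (sq_nonneg γ)) hV,
      mul_nonneg (mul_nonneg (sq_nonneg γ) hα0.le) hV]
  have f5 : 2*γ^2*α*Gn^2 ≤ γ*α*(Gn^2*(1/L)) := by
    linarith [mul_le_mul_of_nonneg_right hL1.le (show (0:ℝ) ≤ γ*α*Gn^2 by positivity)]
  have f6 : γ*α*(2/μ*B^2) + 10/3*γ^2*α*B^2 ≤ 4*γ*α/μ*B^2 := by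
    have h := mul_le_mul_of_nonneg_right hμ1 (show (0:ℝ) ≤ γ*α*B^2 by positivity)
    ring_nf at h ⊢
    linarith [h]
  ring_nf at f1 f2 f3 f4 f5 f6 ⊢
  linarith [f1, f2, f3, f4, f5, f6]

set_option maxHeartbeats 1000000 in
/-- One damped stochastic step `y_{t+1} = y_t - γ α w` with a (possibly biased) random
direction `w`, on an `L`-smooth, `μ`-strongly convex function `g` with minimizer `y*`,
`γ < 1/(2L)` and `0 < α < 1`:
`𝔼‖y_{t+1} - y*‖² ≤ (1 - μγα/2)‖y_t - y*‖² - (γ²α/4)‖𝔼[w]‖²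
  + (4γα/μ)‖∇g(y_t) - 𝔼[w]‖² + (3γ²α/2) Var[w]`. -/
theorem biased_sgd_one_step_bound {d : ℕ} {Ω : Type*} [MeasurableSpace Ω]
    (P : Measure Ω) [IsProbabilityMeasure P]
    (g : EuclideanSpace ℝ (Fin d) → ℝ)
    (G : EuclideanSpace ℝ (Fin d) → EuclideanSpace ℝ (Fin d))
    (L μ γ α : ℝ) (hL : 0 < L) (hμ : 0 < μ)
    (hgrad : ∀ y, HasGradientAt g (G y) y)
    (hsc : ∀ y1 y2, g y2 + ⟪G y2, y1 - y2⟫_ℝ + μ / 2 * ‖y1 - y2‖ ^ 2 ≤ g y1)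
    (hsm : ∀ y1 y2, ‖G y1 - G y2‖ ≤ L * ‖y1 - y2‖)
    (ystar : EuclideanSpace ℝ (Fin d)) (hmin : ∀ y, g ystar ≤ g y)
    (yt : EuclideanSpace ℝ (Fin d)) (w : Ω → EuclideanSpace ℝ (Fin d))
    (hw : Integrable w P)
    (wbar : EuclideanSpace ℝ (Fin d)) (hwbar : wbar = ∫ ω, w ω ∂P)
    (V : ℝ) (hV : V = ∫ ω, ‖w ω - wbar‖ ^ 2 ∂P)
    (hw2 : Integrable (fun ω => ‖w ω - wbar‖ ^ 2) P)
    (hγ0 : 0 < γ) (hγ : γ < 1 / (2 * L)) (hα0 : 0 < α) (hα1 : α < 1) :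
    ∫ ω, ‖yt - (γ * α) • w ω - ystar‖ ^ 2 ∂P
      ≤ (1 - μ * γ * α / 2) * ‖yt - ystar‖ ^ 2 - γ ^ 2 * α / 4 * ‖wbar‖ ^ 2
        + 4 * γ * α / μ * ‖G yt - wbar‖ ^ 2 + 3 * γ ^ 2 * α / 2 * V := by
  have he0 : 0 < γ * α := mul_pos hγ0 hα0
  -- Step 1: the expectation identity
  set e := γ * α with he
  set c := yt - e • wbar - ystar with hc
  have hu : Integrable (fun ω => w ω - wbar) P := hw.sub (integrable_const _)
  have hrep : ∀ ω, ‖yt - e • w ω - ystar‖ ^ 2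
      = ‖c‖ ^ 2 - 2 * e * ⟪c, w ω - wbar⟫_ℝ + e ^ 2 * ‖w ω - wbar‖ ^ 2 := by
    intro ω
    have h1 : yt - e • w ω - ystar = c - e • (w ω - wbar) := by
      rw [hc, smul_sub]; abel
    rw [h1, norm_sub_sq_real, real_inner_smul_right, norm_smul, Real.norm_eq_abs,
      abs_of_pos he0, mul_pow]
    ring
  have hi1 : Integrable (fun ω => ⟪c, w ω - wbar⟫_ℝ) P := hu.const_inner c
  have hsub0 : ∫ ω, (w ω - wbar) ∂P = 0 := by
    rw [integral_sub hw (integrable_const _), integral_const]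
    simp [measure_univ, ← hwbar]
  have hI : ∫ ω, ‖yt - e • w ω - ystar‖ ^ 2 ∂P = ‖c‖ ^ 2 + e ^ 2 * V := by
    calc ∫ ω, ‖yt - e • w ω - ystar‖ ^ 2 ∂P
        = ∫ ω, (‖c‖ ^ 2 - 2 * e * ⟪c, w ω - wbar⟫_ℝ + e ^ 2 * ‖w ω - wbar‖ ^ 2) ∂P := by
          simp_rw [hrep]
      _ = (∫ _, ‖c‖ ^ 2 ∂P) - (∫ ω, 2 * e * ⟪c, w ω - wbar⟫_ℝ ∂P)
          + ∫ ω, e ^ 2 * ‖w ω - wbar‖ ^ 2 ∂P := by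
          rw [integral_add (f := fun ω => ‖c‖ ^ 2 - 2 * e * ⟪c, w ω - wbar⟫_ℝ)
              (g := fun ω => e ^ 2 * ‖w ω - wbar‖ ^ 2)
              ((integrable_const _).sub (hi1.const_mul _)) (hw2.const_mul _),
            integral_sub (f := fun _ => ‖c‖ ^ 2) (g := fun ω => 2 * e * ⟪c, w ω - wbar⟫_ℝ)
              (integrable_const _) (hi1.const_mul _)]
      _ = ‖c‖ ^ 2 + e ^ 2 * V := by
          rw [integral_const, probReal_univ, integral_const_mul, integral_const_mul,
            integral_inner hu c, hsub0, hV]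
          simp
  have hcexp : ‖c‖ ^ 2 = ‖yt - ystar‖ ^ 2 - 2 * (e * ⟪yt - ystar, wbar⟫_ℝ)
      + e ^ 2 * ‖wbar‖ ^ 2 := by
    have h1 : c = (yt - ystar) - e • wbar := by rw [hc]; abel
    rw [h1, norm_sub_sq_real, real_inner_smul_right, norm_smul, Real.norm_eq_abs,
      abs_of_pos he0, mul_pow]
  rw [hI, hcexp]
  -- Step 2: trivial case `d = 0`
  rcases Nat.eq_zero_or_pos d with hd | hd
  · subst hd
    have hz : ∀ x : EuclideanSpace ℝ (Fin 0), x = 0 := fun x => Subsingleton.elim _ _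
    have hV0 : V = 0 := by
      rw [hV]
      have h : ∀ ω : Ω, ‖w ω - wbar‖ ^ 2 = (0:ℝ) := fun ω => by rw [hz (w ω - wbar)]; simp
      simp_rw [h]
      exact integral_zero _ _
    rw [hV0, hz (yt - ystar), hz wbar, hz (G yt)]
    simp
  -- Step 3: `μ ≤ L`
  have hμL : μ ≤ L := by
    set u : EuclideanSpace ℝ (Fin d) := EuclideanSpace.single ⟨0, hd⟩ 1 with hudef
    have hnu : ‖u‖ = 1 := by rw [hudef, EuclideanSpace.norm_single]; norm_num
    have h1 := hsc u 0
    have h2 := hsc 0 u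
    have h3 : ⟪G u - G 0, u⟫_ℝ ≤ ‖G u - G 0‖ * ‖u‖ := real_inner_le_norm _ _
    have h4 := hsm u 0
    rw [inner_sub_left] at h3
    simp only [sub_zero, zero_sub, inner_neg_right, norm_neg] at h1 h2 h4
    rw [hnu] at h1 h2 h3 h4
    nlinarith
  -- Step 4: key gradient inequality  `μ‖r‖² + ‖G yt‖²/L ≤ 2⟪r, G yt⟫`
  have hLL : (-1/L) * ‖G yt‖ ^ 2 + L/2 * ((1/L)^2 * ‖G yt‖ ^ 2)
      = -(‖G yt‖ ^ 2 * (1/L)) / 2 := by field_simp; ring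
  have hd2 := sgd_descent_lemma g G L hgrad hsm yt ((-1/L) • G yt)
  have hm2 := hmin (yt + (-1/L) • G yt)
  rw [real_inner_smul_right, real_inner_self_eq_norm_sq, norm_smul, Real.norm_eq_abs,
    mul_pow, sq_abs] at hd2
  have habs : ((-1:ℝ)/L) ^ 2 = (1/L) ^ 2 := by ring
  rw [habs] at hd2
  have hgap : ‖G yt‖ ^ 2 * (1/L) ≤ 2 * (g yt - g ystar) := by nlinarith [hd2, hm2, hLL]
  have hsc1 := hsc ystar yt
  have ha1 : ystar - yt = -(yt - ystar) := by abel
  rw [ha1, inner_neg_right, norm_neg, real_inner_comm] at hsc1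
  have hJfact : μ * ‖yt - ystar‖ ^ 2 + ‖G yt‖ ^ 2 * (1/L)
      ≤ 2 * ⟪yt - ystar, G yt⟫_ℝ := by linarith
  -- Step 5: assemble
  have hIJK : ⟪yt - ystar, wbar⟫_ℝ
      = ⟪yt - ystar, G yt⟫_ℝ - ⟪yt - ystar, G yt - wbar⟫_ℝ := by
    rw [inner_sub_right]; ring
  have hKfact : ⟪yt - ystar, G yt - wbar⟫_ℝ ≤ ‖yt - ystar‖ * ‖G yt - wbar‖ :=
    real_inner_le_norm _ _
  have hWfact : ‖wbar‖ ≤ ‖G yt‖ + ‖G yt - wbar‖ := by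
    simpa [sub_sub_cancel] using norm_sub_le (G yt) (G yt - wbar)
  have hVnn : (0:ℝ) ≤ V := by
    rw [hV]; exact integral_nonneg fun ω => by positivity
  have key := sgd_scalar_ineq ‖yt - ystar‖ ‖G yt - wbar‖ ‖G yt‖ ‖wbar‖
    ⟪yt - ystar, G yt⟫_ℝ ⟪yt - ystar, G yt - wbar⟫_ℝ V L μ γ α
    hL hμ hγ0 hγ hα0 hα1 hμL (norm_nonneg _) (norm_nonneg _) (norm_nonneg _) hVnn
    hJfact hKfact hWfact
  rw [hIJK, he]
  linarith [key]
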